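/- For any odd n ≥ 3, the number of crossing tiles in a corner-connection knot mosaic of size n is at most (n² + n − 4)/2. -/

import Mathlib

/-- The eleven corner-connection tile types. -/
inductive Tile : Type
  | T0 | T1 | T2 | T3 | T4 | T5 | T6 | T7 | T8 | T9 | T10
  deriving DecidableEq

open Tile

/-- `cp t a b = true` iff tile `t` has a connection point at the corner of its cell
with vertical offset `a` (`false` = top, `true` = bottom) and horizontal offset `b`
(`false` = left, `true` = right).  `T0` is blank; `T1`–`T4` are the single-arc tiles
(connection points at the two corners of one side, the four sides in order top,
bottom, left, right); `T5`, `T6` are the diagonal segment tiles ({TL, BR} and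
{TR, BL}); `T7`–`T10` (double arcs and crossings) use all four corners. -/
def cp : Tile → Bool → Bool → Bool
  | T0, _, _ => false
  | T1, a, _ => !a
  | T2, a, _ => a
  | T3, _, b => !b
  | T4, _, b => b
  | T5, a, b => a == b
  | T6, a, b => a != b
  | _, _, _ => true

/-- Crossing tiles. -/
def isCrossing : Tile → Bool
  | T9 | T10 => true
  | _ => false

/-- Tiles with four connection points. -/
def isFourCP : Tile → Bool
  | T7 | T8 | T9 | T10 => true
  | _ => false

/-- Double-arc tiles. -/
def isDoubleArc : Tile → Bool
  | T7 | T8 => true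
  | _ => false

/-- The number of connection-point incidences at the grid vertex `(r, c)`:
the number of cells incident to this vertex whose tile has a connection point
at the corresponding corner.  (The cell incident to `(r, c)` via its corner
with offsets `(a, b)` is the cell `(r - a, c - b)`, which exists iff `a ≤ r`
and `b ≤ c`.) -/
def vertexCount (M : ℕ → ℕ → Tile) (r c : ℕ) : ℕ :=
  ∑ p : Bool × Bool,
    if p.1.toNat ≤ r ∧ p.2.toNat ≤ c ∧
        cp (M (r - p.1.toNat) (c - p.2.toNat)) p.1 p.2 = true
    then 1 else 0

/-- A corner-connection knot mosaic with `m` rows and `n` columns: a tiling of the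
`m × n` grid (cells outside the grid are blank) that is suitably connected with no
triple points, i.e. every vertex of the `(m+1) × (n+1)` grid of cell corners has
exactly 0 or 2 connection-point incidences. -/
def IsKnotMosaicRect (m n : ℕ) (M : ℕ → ℕ → Tile) : Prop :=
  (∀ i j, m ≤ i ∨ n ≤ j → M i j = Tile.T0) ∧
  (∀ r c, r ≤ m → c ≤ n → vertexCount M r c = 0 ∨ vertexCount M r c = 2)

/-- A corner-connection knot `n`-mosaic (square, `n` rows and `n` columns). -/
def IsKnotMosaic (n : ℕ) (M : ℕ → ℕ → Tile) : Prop :=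
  IsKnotMosaicRect n n M

/-- The number of crossing tiles in the `m × n` grid. -/
def crossingCountRect (m n : ℕ) (M : ℕ → ℕ → Tile) : ℕ :=
  ((Finset.range m ×ˢ Finset.range n).filter
    (fun p => isCrossing (M p.1 p.2) = true)).card

/-- The number of crossing tiles in the `n × n` grid. -/
def crossingCount (n : ℕ) (M : ℕ → ℕ → Tile) : ℕ :=
  crossingCountRect n n M

private lemma crossing_cp {t : Tile} (h : isCrossing t = true) (a b : Bool) :
    cp t a b = true := by
  cases t <;> simp_all [isCrossing, cp]

private def ovv (i : ℕ) : ℕ := if i % 2 = 1 then i else i + 1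
private def evv (i : ℕ) : ℕ := if i % 2 = 1 then i + 1 else i

private lemma ovv_evv (i : ℕ) :
    ((ovv i = i ∧ evv i = i + 1) ∨ (ovv i = i + 1 ∧ evv i = i)) ∧
      ovv i % 2 = 1 ∧ evv i % 2 = 0 := by
  by_cases h : i % 2 = 1 <;> simp [ovv, evv, h] <;> omega

private def Scross (n : ℕ) (M : ℕ → ℕ → Tile) : Finset (ℕ × ℕ) :=
  (Finset.range n ×ˢ Finset.range n).filter (fun p => isCrossing (M p.1 p.2) = true)

private def fcov (n : ℕ) (q : ℕ × ℕ) : ℕ × ℕ :=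
  if ovv q.1 + ovv q.2 + 1 ≤ n then (ovv q.1, ovv q.2)
  else if n + 1 ≤ evv q.1 + evv q.2 then (evv q.1, evv q.2) else q

private lemma vc_card (M : ℕ → ℕ → Tile) (r c : ℕ) :
    vertexCount M r c =
      (Finset.univ.filter (fun p : Bool × Bool => p.1.toNat ≤ r ∧ p.2.toNat ≤ c ∧
        cp (M (r - p.1.toNat) (c - p.2.toNat)) p.1 p.2 = true)).card := by
  simp [vertexCount, Finset.sum_boole]

private lemma card_touch_le (n : ℕ) (M : ℕ → ℕ → Tile) (hM : IsKnotMosaic n M)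
    (r c : ℕ) (hr : r ≤ n) (hc : c ≤ n) :
    ((Scross n M).filter
      (fun q => (r = q.1 ∨ r = q.1 + 1) ∧ (c = q.2 ∨ c = q.2 + 1))).card ≤ 2 := by
  have hvc : vertexCount M r c ≤ 2 := by
    rcases hM.2 r c hr hc with h | h <;> omega
  rw [vc_card] at hvc
  refine le_trans (Finset.card_le_card_of_injOn
    (fun q => (decide (r = q.1 + 1), decide (c = q.2 + 1))) ?_ ?_) hvc
  · intro q hq
    simp only [Finset.mem_coe, Scross, Finset.mem_filter, Finset.mem_product, Finset.mem_range] at hq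
    obtain ⟨⟨⟨hq1, hq2⟩, hcr⟩, h1, h2⟩ := hq
    have ha : (decide (r = q.1 + 1)).toNat ≤ r ∧ r - (decide (r = q.1 + 1)).toNat = q.1 := by
      rcases h1 with e1 | e1
      · rw [decide_eq_false (show ¬(r = q.1 + 1) by omega)]; simp; omega
      · rw [decide_eq_true e1]; simp; omega
    have hb : (decide (c = q.2 + 1)).toNat ≤ c ∧ c - (decide (c = q.2 + 1)).toNat = q.2 := by
      rcases h2 with e2 | e2
      · rw [decide_eq_false (show ¬(c = q.2 + 1) by omega)]; simp; omega
      · rw [decide_eq_true e2]; simp; omega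
    simp only [Finset.mem_coe, Finset.mem_filter, Finset.mem_univ, true_and]
    exact ⟨ha.1, hb.1, by rw [ha.2, hb.2]; exact crossing_cp hcr _ _⟩
  · intro q hq q' hq' heq
    simp only [Finset.coe_filter, Set.mem_setOf_eq, Scross, Finset.mem_filter,
      Finset.mem_product, Finset.mem_range] at hq hq'
    obtain ⟨-, h1, h2⟩ := hq
    obtain ⟨-, h1', h2'⟩ := hq'
    obtain ⟨d1, d2⟩ := Prod.ext_iff.mp heq
    have t1 : (r = q.1 + 1) ↔ (r = q'.1 + 1) := decide_eq_decide.mp d1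
    have t2 : (c = q.2 + 1) ↔ (c = q'.2 + 1) := decide_eq_decide.mp d2
    have hfst : q.1 = q'.1 := by
      rcases h1 with e | e <;> rcases h1' with e' | e'
      · omega
      · have := t1.mpr e'; omega
      · have := t1.mp e; omega
      · omega
    have hsnd : q.2 = q'.2 := by
      rcases h2 with e | e <;> rcases h2' with e' | e'
      · omega
      · have := t2.mpr e'; omega
      · have := t2.mp e; omega
      · omega
    exact Prod.ext_iff.mpr ⟨hfst, hsnd⟩

private lemma corner_cells (n : ℕ) (M : ℕ → ℕ → Tile) (hM : IsKnotMosaic n M)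
    (hn : 3 ≤ n) :
    isCrossing (M 0 (n - 1)) = false ∧ isCrossing (M (n - 1) 0) = false := by
  have h1n : 1 ≤ n := by omega
  have hT0 : ∀ a b : Bool, cp T0 a b = false := fun _ _ => rfl
  constructor
  · by_contra hcr
    rw [Bool.not_eq_false] at hcr
    have hcp := crossing_cp hcr false true
    have h0 : M 0 n = T0 := hM.1 0 n (Or.inr le_rfl)
    have hv := hM.2 0 n (by omega) le_rfl
    rw [vc_card M 0 n] at hv
    have hfil : (Finset.univ.filter (fun p : Bool × Bool => p.1.toNat ≤ 0 ∧ p.2.toNat ≤ n ∧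
        cp (M (0 - p.1.toNat) (n - p.2.toNat)) p.1 p.2 = true)) = {(false, true)} := by
      ext ⟨a, b⟩
      cases a <;> cases b <;> simp [h0, hT0, hcp, h1n]
    rw [hfil] at hv
    simp at hv
  · by_contra hcr
    rw [Bool.not_eq_false] at hcr
    have hcp := crossing_cp hcr true false
    have h0 : M n 0 = T0 := hM.1 n 0 (Or.inl le_rfl)
    have hv := hM.2 n 0 le_rfl (by omega)
    rw [vc_card M n 0] at hv
    have hfil : (Finset.univ.filter (fun p : Bool × Bool => p.1.toNat ≤ n ∧ p.2.toNat ≤ 0 ∧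
        cp (M (n - p.1.toNat) (0 - p.2.toNat)) p.1 p.2 = true)) = {(true, false)} := by
      ext ⟨a, b⟩
      cases a <;> cases b <;> simp [h0, hT0, hcp, h1n]
    rw [hfil] at hv
    simp at hv

private lemma part_card_le (n : ℕ) (M : ℕ → ℕ → Tile) (hM : IsKnotMosaic n M)
    (P : Finset (ℕ × ℕ)) (hP : P ⊆ Scross n M)
    (htouch : ∀ q ∈ P, ((fcov n q).1 = q.1 ∨ (fcov n q).1 = q.1 + 1) ∧
        ((fcov n q).2 = q.2 ∨ (fcov n q).2 = q.2 + 1) ∧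
        (fcov n q).1 ≤ n ∧ (fcov n q).2 ≤ n)
    (T : Finset (ℕ × ℕ)) (hT : ∀ q ∈ P, fcov n q ∈ T) :
    P.card ≤ 2 * T.card := by
  rw [Finset.card_eq_sum_card_fiberwise hT]
  calc ∑ v ∈ T, (P.filter fun q => fcov n q = v).card
      ≤ ∑ _v ∈ T, 2 := by
        refine Finset.sum_le_sum ?_
        intro v hv
        rcases Finset.eq_empty_or_nonempty (P.filter fun q => fcov n q = v) with he | hne
        · rw [he]; simp
        · obtain ⟨q0, hq0⟩ := hne
          rw [Finset.mem_filter] at hq0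
          obtain ⟨hq0P, hq0v⟩ := hq0
          obtain ⟨o1, o2, ole1, ole2⟩ := htouch q0 hq0P
          rw [hq0v] at o1 o2 ole1 ole2
          refine le_trans (Finset.card_le_card ?_)
            (card_touch_le n M hM v.1 v.2 ole1 ole2)
          intro q hq
          rw [Finset.mem_filter] at hq ⊢
          obtain ⟨hqP, hqv⟩ := hq
          obtain ⟨p1, p2, -, -⟩ := htouch q hqP
          rw [hqv] at p1 p2
          exact ⟨hP hqP, p1, p2⟩
    _ = 2 * T.card := by rw [Finset.sum_const, smul_eq_mul, mul_comm]

private lemma tri_sum (k : ℕ) : (∑ a ∈ Finset.range k, (k - a)) * 2 = k * (k + 1) := by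
  induction k with
  | zero => simp
  | succ m ih =>
    have h1 : ∀ a ∈ Finset.range m, m + 1 - a = (m - a) + 1 := by
      intro a ha; have := Finset.mem_range.mp ha; omega
    rw [Finset.sum_range_succ, Finset.sum_congr rfl h1, Finset.sum_add_distrib,
      Finset.sum_const, Finset.card_range, smul_eq_mul, mul_one]
    have h2 : m + 1 - m = 1 := by omega
    rw [h2]
    nlinarith [ih]

/-- For any odd `n ≥ 3`, a corner-connection knot `n`-mosaic has at most
`(n² + n − 4) / 2` crossing tiles. -/
theorem max_crossings_odd
    (n : ℕ) (hn : 3 ≤ n) (hpar : Odd n)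
    (M : ℕ → ℕ → Tile) (hM : IsKnotMosaic n M) :
    crossingCount n M ≤ (n ^ 2 + n - 4) / 2 := by
  classical
  obtain ⟨k, hk⟩ := hpar
  have hk1 : 1 ≤ k := by omega
  have hcc : crossingCount n M = (Scross n M).card := rfl
  set SO : Finset (ℕ × ℕ) :=
    (Scross n M).filter (fun q => ovv q.1 + ovv q.2 + 1 ≤ n) with hSO
  set Srest : Finset (ℕ × ℕ) :=
    (Scross n M).filter (fun q => ¬(ovv q.1 + ovv q.2 + 1 ≤ n)) with hSrest
  set SE : Finset (ℕ × ℕ) :=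
    Srest.filter (fun q => n + 1 ≤ evv q.1 + evv q.2) with hSE
  set SZ : Finset (ℕ × ℕ) :=
    Srest.filter (fun q => ¬(n + 1 ≤ evv q.1 + evv q.2)) with hSZ
  have hsplit1 : SO.card + Srest.card = (Scross n M).card :=
    Finset.card_filter_add_card_filter_not _
  have hsplit2 : SE.card + SZ.card = Srest.card :=
    Finset.card_filter_add_card_filter_not _
  set Tri : Finset ((_ : ℕ) × ℕ) :=
    (Finset.range k).sigma (fun a => Finset.range (k - a)) with hTri
  have htri_card : Tri.card * 2 = k * (k + 1) := by
    rw [hTri, Finset.card_sigma]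
    simp only [Finset.card_range]
    exact tri_sum k
  -- O part
  have hOmem : ∀ q ∈ SO, q.1 < n ∧ q.2 < n ∧ ovv q.1 + ovv q.2 + 1 ≤ n := by
    intro q hq
    simp only [hSO, Finset.mem_filter, Scross, Finset.mem_product, Finset.mem_range] at hq
    exact ⟨hq.1.1.1, hq.1.1.2, hq.2⟩
  have hOfq : ∀ q ∈ SO, fcov n q = (ovv q.1, ovv q.2) := by
    intro q hq
    obtain ⟨-, -, hB1⟩ := hOmem q hq
    simp only [fcov]
    rw [if_pos hB1]
  have hOcard : SO.card ≤ 2 * Tri.card := by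
    have hTO : (Tri.image (fun x => (2 * x.1 + 1, 2 * x.2 + 1))).card ≤ Tri.card :=
      Finset.card_image_le
    refine le_trans (part_card_le n M hM SO (Finset.filter_subset _ _) ?_
      (Tri.image (fun x => (2 * x.1 + 1, 2 * x.2 + 1))) ?_) (by omega)
    · intro q hq
      obtain ⟨hq1, hq2, hB1⟩ := hOmem q hq
      obtain ⟨ho1, hp1, -⟩ := ovv_evv q.1
      obtain ⟨ho2, hp2, -⟩ := ovv_evv q.2
      rw [hOfq q hq]
      exact ⟨by show ovv q.1 = q.1 ∨ ovv q.1 = q.1 + 1; omega,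
        by show ovv q.2 = q.2 ∨ ovv q.2 = q.2 + 1; omega,
        by show ovv q.1 ≤ n; omega, by show ovv q.2 ≤ n; omega⟩
    · intro q hq
      obtain ⟨hq1, hq2, hB1⟩ := hOmem q hq
      obtain ⟨ho1, hp1, -⟩ := ovv_evv q.1
      obtain ⟨ho2, hp2, -⟩ := ovv_evv q.2
      rw [hOfq q hq, Finset.mem_image]
      refine ⟨⟨ovv q.1 / 2, ovv q.2 / 2⟩, ?_, ?_⟩
      · exact Finset.mem_sigma.mpr ⟨Finset.mem_range.mpr (show ovv q.1 / 2 < k by omega),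
          Finset.mem_range.mpr (show ovv q.2 / 2 < k - ovv q.1 / 2 by omega)⟩
      · have e1 : 2 * (ovv q.1 / 2) + 1 = ovv q.1 := by omega
        have e2 : 2 * (ovv q.2 / 2) + 1 = ovv q.2 := by omega
        show (2 * (ovv q.1 / 2) + 1, 2 * (ovv q.2 / 2) + 1) = (ovv q.1, ovv q.2)
        rw [e1, e2]
  -- E part
  have hEmem : ∀ q ∈ SE, q.1 < n ∧ q.2 < n ∧ ¬(ovv q.1 + ovv q.2 + 1 ≤ n) ∧
      n + 1 ≤ evv q.1 + evv q.2 := by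
    intro q hq
    simp only [hSE, Finset.mem_filter, hSrest, Scross, Finset.mem_product,
      Finset.mem_range] at hq
    exact ⟨hq.1.1.1.1, hq.1.1.1.2, hq.1.2, hq.2⟩
  have hEfq : ∀ q ∈ SE, fcov n q = (evv q.1, evv q.2) := by
    intro q hq
    obtain ⟨-, -, hB1, hB2⟩ := hEmem q hq
    simp only [fcov]
    rw [if_neg hB1, if_pos hB2]
  have hEcard : SE.card ≤ 2 * Tri.card := by
    have hTE : (Tri.image (fun x => (2 * k - 2 * x.1, 2 * x.1 + 2 * x.2 + 2))).card
        ≤ Tri.card := Finset.card_image_le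
    refine le_trans (part_card_le n M hM SE ?_ ?_
      (Tri.image (fun x => (2 * k - 2 * x.1, 2 * x.1 + 2 * x.2 + 2))) ?_) (by omega)
    · intro q hq
      simp only [hSE, Finset.mem_filter, hSrest] at hq
      exact hq.1.1
    · intro q hq
      obtain ⟨hq1, hq2, hB1, hB2⟩ := hEmem q hq
      obtain ⟨he1, ho1, hp1⟩ := ovv_evv q.1
      obtain ⟨he2, ho2, hp2⟩ := ovv_evv q.2
      rw [hEfq q hq]
      exact ⟨by show evv q.1 = q.1 ∨ evv q.1 = q.1 + 1; omega,
        by show evv q.2 = q.2 ∨ evv q.2 = q.2 + 1; omega,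
        by show evv q.1 ≤ n; omega, by show evv q.2 ≤ n; omega⟩
    · intro q hq
      obtain ⟨hq1, hq2, hB1, hB2⟩ := hEmem q hq
      obtain ⟨he1, ho1, hp1⟩ := ovv_evv q.1
      obtain ⟨he2, ho2, hp2⟩ := ovv_evv q.2
      rw [hEfq q hq, Finset.mem_image]
      refine ⟨⟨k - evv q.1 / 2, (evv q.2 - (2 * (k - evv q.1 / 2) + 2)) / 2⟩, ?_, ?_⟩
      · exact Finset.mem_sigma.mpr ⟨Finset.mem_range.mpr (show k - evv q.1 / 2 < k by omega),
          Finset.mem_range.mpr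
            (show (evv q.2 - (2 * (k - evv q.1 / 2) + 2)) / 2 < k - (k - evv q.1 / 2) by omega)⟩
      · have e1 : 2 * k - 2 * (k - evv q.1 / 2) = evv q.1 := by omega
        have e2 : 2 * (k - evv q.1 / 2) +
            2 * ((evv q.2 - (2 * (k - evv q.1 / 2) + 2)) / 2) + 2 = evv q.2 := by omega
        show (2 * k - 2 * (k - evv q.1 / 2),
          2 * (k - evv q.1 / 2) + 2 * ((evv q.2 - (2 * (k - evv q.1 / 2) + 2)) / 2) + 2)
          = (evv q.1, evv q.2)
        rw [e1, e2]
  -- Z part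
  have hZcard : SZ.card ≤ k - 1 := by
    have hsub : SZ ⊆ (Finset.range (k - 1)).image
        (fun s => ((2 * s + 2 : ℕ), (2 * k - 2 * s - 2 : ℕ))) := by
      intro q hq
      simp only [hSZ, Finset.mem_filter, hSrest, Scross, Finset.mem_product,
        Finset.mem_range] at hq
      obtain ⟨⟨⟨⟨hq1, hq2⟩, hcr⟩, hB1⟩, hB2⟩ := hq
      obtain ⟨he1, ho1, hp1⟩ := ovv_evv q.1
      obtain ⟨he2, ho2, hp2⟩ := ovv_evv q.2
      have hkey : q.1 % 2 = 0 ∧ q.2 % 2 = 0 ∧ q.1 + q.2 = 2 * k := by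
        constructor
        · omega
        constructor
        · omega
        · omega
      obtain ⟨hc1, hc2⟩ := corner_cells n M hM hn
      have hne1 : q.1 ≠ 0 := by
        intro h0
        have h2' : q.2 = n - 1 := by omega
        have hx : isCrossing (M q.1 q.2) = false := by rw [h0, h2']; exact hc1
        rw [hx] at hcr
        simp at hcr
      have hne2 : q.1 ≠ n - 1 := by
        intro h0
        have h2' : q.2 = 0 := by omega
        have hx : isCrossing (M q.1 q.2) = false := by rw [h0, h2']; exact hc2
        rw [hx] at hcr
        simp at hcr
      rw [Finset.mem_image]
      refine ⟨q.1 / 2 - 1, Finset.mem_range.mpr (by omega), ?_⟩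
      have e1 : 2 * (q.1 / 2 - 1) + 2 = q.1 := by omega
      have e2 : 2 * k - 2 * (q.1 / 2 - 1) - 2 = q.2 := by omega
      show (2 * (q.1 / 2 - 1) + 2, 2 * k - 2 * (q.1 / 2 - 1) - 2) = q
      rw [e1, e2]
    refine le_trans (Finset.card_le_card hsub) (le_trans Finset.card_image_le ?_)
    rw [Finset.card_range]
  -- assemble
  have hn2 : (n ^ 2 + n - 4) / 2 = 2 * (k * k) + 3 * k - 1 := by
    have hsq : n ^ 2 = 4 * (k * k) + 4 * k + 1 := by subst hk; ring
    omega
  have htri' : Tri.card * 2 = k * k + k := by rw [htri_card]; ring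
  rw [hcc, hn2]
  omega
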